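/- For every x ∈ F_8 ⊆ F_{2^n} (with 3 | n), the absolute trace from F_8 to F_2 of 1/(1 + x + x^{-1}) equals 1, where 0^{-1} = 0 (so for x = 0 the expression is 1/(1+0+0) = 1). Equivalently: for all x in the field F_8, Tr^3_1(1/(1 + x + x^{2^3 - 2})) = 1. -/

import Mathlib

theorem stmt9 {F : Type*} [Field F] [Fintype F]
    (hcard : Fintype.card F = 8) :
    ∀ x : F, (1 + x + x⁻¹)⁻¹ + ((1 + x + x⁻¹)⁻¹) ^ 2 + ((1 + x + x⁻¹)⁻¹) ^ 4 = 1 := by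
  have h8 : (8 : F) = 0 := by
    have := FiniteField.cast_card_eq_zero F
    rwa [hcard] at this
  have h2 : (2 : F) = 0 := by
    have h : (2 : F) ^ 3 = 0 := by rw [show ((2:F))^3 = 8 by norm_num, h8]
    exact pow_eq_zero_iff (by norm_num) |>.mp h
  intro x
  have hx8 : x ^ 8 = x := by
    have := FiniteField.pow_card x
    rwa [hcard] at this
  rcases eq_or_ne x 0 with rfl | hx
  · norm_num
    linear_combination h2
  · have hd : x ^ 2 + x + 1 ≠ 0 := by
      intro h
      have hx3 : x ^ 3 = 1 := by linear_combination (x + 1) * h - (x^2 + x + 1) * h2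
      have hx2 : x ^ 2 = x := by linear_combination hx8 - x ^ 2 * (x^3 + 1) * hx3
      have hx1 : x = 1 := mul_left_cancel₀ hx (by linear_combination hx2)
      rw [hx1] at h
      exact one_ne_zero (by linear_combination h - h2)
    have ht : 1 + x + x⁻¹ ≠ 0 := by
      intro h
      apply hd
      have h' := mul_eq_zero_of_left h x
      field_simp at h'
      linear_combination h'
    have hx7 : x ^ 7 = 1 := by
      have : x * x ^ 7 = x * 1 := by linear_combination hx8
      exact mul_left_cancel₀ hx this
    have hy : (1 + x + x⁻¹)⁻¹ = x / (x ^ 2 + x + 1) := by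
      rw [eq_div_iff hd]
      rw [inv_mul_eq_div, div_eq_iff ht]
      field_simp
      ring
    rw [hy]
    field_simp
    rw [div_eq_iff (pow_ne_zero 4 (by intro h0; exact hd (by linear_combination h0)))]
    linear_combination (-x-3) * hx7 + (-3*x^6-4*x^5-4*x^4-4*x^3-3*x^2-2*x-2) * h2
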